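/- Let (c_k)_{k≥1} be nonnegative with V_N = 2∑_{k=1}^N k²c_k² slowly varying (Karamata) and divergent. Then N²·∑_{s ≥ N} c_s² = o(V_N) as N → ∞. -/

import Mathlib

open Filter Finset

/-- If `V_N = 2∑_{k=1}^N k²c_k²` is slowly varying (Karamata) and diverges, then
`N²·∑_{s≥N} c_s² = o(V_N)`. -/
theorem tail_sum_isLittleO
    (c : ℕ → ℝ) (hc : ∀ k, 0 ≤ c k)
    (V : ℕ → ℝ) (hV : ∀ N, V N = 2 * ∑ k ∈ Icc 1 N, (k : ℝ) ^ 2 * c k ^ 2)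
    (hslow : ∀ l : ℝ, 0 < l →
      Tendsto (fun N : ℕ => V ⌊l * N⌋₊ / V N) atTop (nhds 1))
    (hdiv : Tendsto V atTop atTop) :
    (fun N : ℕ => (N : ℝ) ^ 2 * ∑' s : ℕ, if N ≤ s then c s ^ 2 else 0)
      =o[atTop] V := by
  set f : ℕ → ℝ := fun s => c s ^ 2 with hfdef
  have hf0 : ∀ s, 0 ≤ f s := fun s => sq_nonneg _
  by_cases hf : Summable f
  case neg =>
    have hzero : ∀ N : ℕ, (∑' s : ℕ, if N ≤ s then c s ^ 2 else 0) = 0 := by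
      intro N
      apply tsum_eq_zero_of_not_summable
      intro h
      apply hf
      have h2 : Summable (fun s => if N ≤ s then (0:ℝ) else c s ^ 2) := by
        apply summable_of_ne_finset_zero (s := Finset.range N)
        intro s hs
        simp only [Finset.mem_range, not_lt] at hs
        simp [hs]
      have h3 := h.add h2
      apply h3.congr
      intro s
      by_cases hsN : N ≤ s <;> simp [hfdef, hsN]
    have : (fun N : ℕ => (N : ℝ) ^ 2 * ∑' s : ℕ, if N ≤ s then c s ^ 2 else 0)
        = fun _ : ℕ => (0:ℝ) := by
      funext N; rw [hzero, mul_zero]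
    rw [this]
    exact Asymptotics.isLittleO_zero V atTop
  -- main case
  set T : ℕ → ℝ := fun N => ∑' i, f (i + N) with hTdef
  have hftail : ∀ N : ℕ, Summable (fun i => f (i + N)) :=
    fun N => (summable_nat_add_iff N).2 hf
  have hTeq : ∀ N : ℕ, (∑' s : ℕ, if N ≤ s then c s ^ 2 else 0) = T N := by
    intro N
    set g : ℕ → ℝ := fun s => if N ≤ s then c s ^ 2 else 0 with hgdef
    have hg : Summable g := by
      apply hf.of_nonneg_of_le (fun s => by positivity)
      intro s
      by_cases hsN : N ≤ s <;> simp [hgdef, hfdef, hsN, sq_nonneg]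
    have := (Summable.sum_add_tsum_nat_add N hg).symm
    rw [this]
    have e1 : ∑ i ∈ range N, g i = 0 := by
      apply Finset.sum_eq_zero
      intro i hi
      simp only [Finset.mem_range] at hi
      simp [hgdef, Nat.not_le.2 hi]
    have e2 : ∑' i, g (i + N) = T N := by
      apply tsum_congr
      intro i
      simp [hgdef, hfdef, Nat.le_add_left]
    rw [e1, e2, zero_add]
  have hT0 : ∀ N, 0 ≤ T N := fun N => tsum_nonneg (fun i => hf0 _)
  -- splitting identity
  have hTsplit : ∀ N : ℕ, T N = (∑ s ∈ Ico N (2*N), f s) + T (2*N) := by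
    intro N
    have h1 := (Summable.sum_add_tsum_nat_add N (hftail N)).symm
    simp only [hTdef] at *
    rw [h1]
    congr 1
    · rw [Finset.sum_Ico_eq_sum_range]
      apply Finset.sum_congr (by congr 1; omega)
      intro i _
      congr 1
      omega
    · apply tsum_congr
      intro i
      congr 1
      omega
  -- V basics
  have hV0 : ∀ N, 0 ≤ V N := by
    intro N
    rw [hV]
    positivity
  have hVmono : Monotone V := by
    intro a b hab
    rw [hV, hV]
    have := Finset.sum_le_sum_of_subset_of_nonneg (f := fun k : ℕ => (k:ℝ)^2 * c k ^ 2)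
      (Finset.Icc_subset_Icc (le_refl 1) hab) (fun k hk _ => by positivity)
    linarith
  -- partial sums S
  set S : ℕ → ℝ := fun M => ∑ s ∈ Ico 1 M, (s:ℝ)^2 * f s with hSdef
  have hVS : ∀ M, V M = 2 * S (M+1) := by
    intro M
    rw [hV, hSdef, ← Finset.Ico_add_one_right_eq_Icc]
  have hIcoS : ∀ N : ℕ, 1 ≤ N → ∑ s ∈ Ico N (2*N), (s:ℝ)^2 * f s = S (2*N) - S N := by
    intro N hN
    have := Finset.sum_Ico_consecutive (fun s => (s:ℝ)^2 * f s) hN (by omega : N ≤ 2*N)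
    simp only [hSdef]
    linarith
  -- key step inequality
  have hstep : ∀ N : ℕ, 1 ≤ N →
      (N:ℝ)^2 * T N ≤ (V (2*N) - V (N-1))/2 + (N:ℝ)^2 * T (2*N) := by
    intro N hN
    have h1 : (N:ℝ)^2 * (∑ s ∈ Ico N (2*N), f s) ≤ ∑ s ∈ Ico N (2*N), (s:ℝ)^2 * f s := by
      rw [Finset.mul_sum]
      apply Finset.sum_le_sum
      intro s hs
      have hns : N ≤ s := (Finset.mem_Ico.1 hs).1
      have : (N:ℝ) ≤ (s:ℝ) := by exact_mod_cast hns
      have hN0 : (0:ℝ) ≤ N := Nat.cast_nonneg N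
      exact mul_le_mul_of_nonneg_right (pow_le_pow_left₀ hN0 this 2) (hf0 s)
    have h2 : ∑ s ∈ Ico N (2*N), (s:ℝ)^2 * f s ≤ (V (2*N) - V (N-1))/2 := by
      rw [hIcoS N hN]
      have e1 : V (2*N - 1) = 2 * S (2*N) := by
        rw [hVS]; congr 2; omega
      have e2 : V (N - 1) = 2 * S N := by
        rw [hVS]; congr 2; omega
      have e3 : V (2*N - 1) ≤ V (2*N) := hVmono (by omega)
      linarith
    have := hTsplit N
    nlinarith [sq_nonneg (N:ℝ)]
  -- limits
  have hVpos : ∀ᶠ N : ℕ in atTop, 0 < V N := hdiv.eventually_gt_atTop 0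
  have hfloor2 : ∀ N : ℕ, ⌊(2:ℝ) * N⌋₊ = 2 * N := by
    intro N
    rw [show (2:ℝ) * N = ((2*N : ℕ) : ℝ) by push_cast; ring, Nat.floor_natCast]
  have h2lim : Tendsto (fun N : ℕ => V (2 * N) / V N) atTop (nhds 1) := by
    have := hslow 2 (by norm_num)
    apply this.congr
    intro N
    rw [hfloor2]
  have hhalf : Tendsto (fun N : ℕ => V (N / 2) / V N) atTop (nhds 1) := by
    have := hslow (1/2) (by norm_num)
    apply this.congr
    intro N
    congr 2
    rw [show (1/2 : ℝ) * N = (N:ℝ) / (2:ℕ) by push_cast; ring, Nat.floor_div_natCast,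
      Nat.floor_natCast]
  have hpred : Tendsto (fun N : ℕ => V (N - 1) / V N) atTop (nhds 1) := by
    apply tendsto_of_tendsto_of_tendsto_of_le_of_le' hhalf tendsto_const_nhds
    · filter_upwards [eventually_ge_atTop 2, hVpos] with N hN hVN
      gcongr
      exact hVmono (by omega)
    · filter_upwards [hVpos] with N hN
      exact div_le_one_of_le₀ (hVmono (by omega)) (le_of_lt hN)
  have hgoal : (fun N : ℕ => (N : ℝ) ^ 2 * ∑' s : ℕ, if N ≤ s then c s ^ 2 else 0)
      = fun N : ℕ => (N:ℝ)^2 * T N := by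
    funext N; rw [hTeq]
  rw [hgoal]
  have hdiff : Tendsto (fun N : ℕ => (V (2*N) - V (N-1)) / V N) atTop (nhds 0) := by
    have h := h2lim.sub hpred
    rw [sub_self] at h
    apply h.congr
    intro N
    rw [sub_div]
  rw [Asymptotics.isLittleO_iff]
  intro ε hε
  set δ := min ε 1 with hδdef
  have hδpos : 0 < δ := lt_min hε one_pos
  have hδ1 : δ ≤ 1 := min_le_right _ _
  have hδε : δ ≤ ε := min_le_left _ _
  have hev : ∀ᶠ N : ℕ in atTop, V (2*N) - V (N-1) ≤ δ * V N ∧ 0 < V N ∧ 1 ≤ N := by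
    filter_upwards [hdiff.eventually_lt_const hδpos, hVpos, eventually_ge_atTop 1]
      with N h1 h2 h3
    refine ⟨?_, h2, h3⟩
    have := (div_lt_iff₀ h2).1 h1
    linarith
  obtain ⟨N₀, hN₀⟩ := eventually_atTop.1 hev
  rw [eventually_atTop]
  refine ⟨N₀, fun N hN => ?_⟩
  obtain ⟨_, hVNpos, hNpos⟩ := hN₀ N hN
  -- doubling bound
  have hdbl : ∀ M, N₀ ≤ M → V (2*M) ≤ 2 * V M := by
    intro M hM
    obtain ⟨h1, h2, h3⟩ := hN₀ M hM
    have h4 := hVmono (show M - 1 ≤ M by omega)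
    nlinarith [hV0 M]
  -- chain bound
  have hchain : ∀ i : ℕ, V (2^i * N) ≤ (2:ℝ)^i * V N := by
    intro i
    induction i with
    | zero => simp
    | succ i ih =>
      have hge : N₀ ≤ 2^i * N := hN.trans (Nat.le_mul_of_pos_left N (Nat.two_pow_pos i))
      calc V (2^(i+1) * N) = V (2 * (2^i * N)) := by congr 1; ring
        _ ≤ 2 * V (2^i * N) := hdbl _ hge
        _ ≤ 2 * ((2:ℝ)^i * V N) := by linarith
        _ = (2:ℝ)^(i+1) * V N := by ring
  -- scaled step inequality
  have hstep2 : ∀ k : ℕ, (N:ℝ)^2 * T (2^k * N) ≤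
      (δ/2) * (1/2:ℝ)^k * V N + (N:ℝ)^2 * T (2^(k+1) * N) := by
    intro k
    have hge : N₀ ≤ 2^k * N := hN.trans (Nat.le_mul_of_pos_left N (Nat.two_pow_pos k))
    obtain ⟨h1, h2, h3⟩ := hN₀ (2^k * N) hge
    have hs := hstep (2^k * N) h3
    have hVM : V (2^k * N) ≤ (2:ℝ)^k * V N := hchain k
    have hMcast : ((2^k * N : ℕ):ℝ) = (2:ℝ)^k * (N:ℝ) := by push_cast; ring
    have h2M : 2 * (2^k * N) = 2^(k+1) * N := by ring
    rw [h2M, hMcast] at hs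
    rw [h2M] at h1
    have h4 : (0:ℝ) < (4:ℝ)^k := by positivity
    refine le_of_mul_le_mul_left ?_ h4
    have e4 : ((2:ℝ)^k * (N:ℝ))^2 = (4:ℝ)^k * (N:ℝ)^2 := by
      rw [mul_pow, ← pow_mul, mul_comm k 2, pow_mul]; norm_num
    have e2 : (4:ℝ)^k * ((1:ℝ)/2)^k = (2:ℝ)^k := by rw [← mul_pow]; norm_num
    rw [e4] at hs
    have hprod := mul_le_mul_of_nonneg_left hVM hδpos.le
    calc (4:ℝ)^k * ((N:ℝ)^2 * T (2^k*N))
        ≤ (V (2^(k+1)*N) - V (2^k*N - 1))/2 + (4:ℝ)^k * ((N:ℝ)^2 * T (2^(k+1)*N)) := by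
          linarith
      _ ≤ (δ * ((2:ℝ)^k * V N))/2 + (4:ℝ)^k * ((N:ℝ)^2 * T (2^(k+1)*N)) := by
          linarith
      _ = (4:ℝ)^k * ((δ/2) * (1/2:ℝ)^k * V N + (N:ℝ)^2 * T (2^(k+1)*N)) := by
          linear_combination (-(δ/2)) * V N * e2
  -- cumulative bound
  have hcum : ∀ k : ℕ, (N:ℝ)^2 * T N ≤ δ * V N + (N:ℝ)^2 * T (2^k * N) := by
    have hpre : ∀ k : ℕ, (N:ℝ)^2 * T N ≤
        (δ/2) * (∑ i ∈ range k, (1/2:ℝ)^i) * V N + (N:ℝ)^2 * T (2^k * N) := by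
      intro k
      induction k with
      | zero => simp
      | succ k ih =>
        have h := hstep2 k
        rw [Finset.sum_range_succ]
        have expand : (δ/2) * ((∑ i ∈ range k, (1/2:ℝ)^i) + (1/2:ℝ)^k) * V N
            = (δ/2) * (∑ i ∈ range k, (1/2:ℝ)^i) * V N + (δ/2) * (1/2:ℝ)^k * V N := by
          ring
        linarith
    intro k
    have h := hpre k
    have hsum : ∑ i ∈ range k, (1/2:ℝ)^i ≤ 2 := by
      rw [geom_sum_eq (by norm_num : (1/2:ℝ) ≠ 1) k]
      have h0 : (0:ℝ) ≤ (1/2:ℝ)^k := by positivity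
      rw [div_le_iff_of_neg (by norm_num : (1/2:ℝ) - 1 < 0)]
      linarith
    have hbd : (δ/2) * (∑ i ∈ range k, (1/2:ℝ)^i) * V N ≤ (δ/2) * 2 * V N :=
      mul_le_mul_of_nonneg_right
        (mul_le_mul_of_nonneg_left hsum (by positivity : (0:ℝ) ≤ δ/2)) (hV0 N)
    linarith
  -- take the limit in k
  have hlim : Tendsto (fun k : ℕ => T (2^k * N)) atTop (nhds 0) := by
    have hmono : Tendsto (fun k : ℕ => 2^k * N) atTop atTop := by
      apply tendsto_atTop_mono (fun k => Nat.le_mul_of_pos_right (2^k) hNpos)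
      exact tendsto_pow_atTop_atTop_of_one_lt one_lt_two
    have hT2 : Tendsto T atTop (nhds 0) := by
      simp only [hTdef]
      exact tendsto_sum_nat_add f
    exact hT2.comp hmono
  have hfinal : (N:ℝ)^2 * T N ≤ δ * V N := by
    have hl : Tendsto (fun k : ℕ => δ * V N + (N:ℝ)^2 * T (2^k*N)) atTop
        (nhds (δ * V N + (N:ℝ)^2 * 0)) :=
      tendsto_const_nhds.add (tendsto_const_nhds.mul hlim)
    rw [mul_zero, add_zero] at hl
    exact ge_of_tendsto' hl hcum
  -- conclude
  have hL0 : 0 ≤ (N:ℝ)^2 * T N := mul_nonneg (by positivity) (hT0 N)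
  rw [Real.norm_eq_abs, Real.norm_eq_abs, abs_of_nonneg hL0, abs_of_nonneg (hV0 N)]
  have : δ * V N ≤ ε * V N := mul_le_mul_of_nonneg_right hδε (hV0 N)
  linarith
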